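/- Let H = H_0 ∪ H_1 and suppose the functional T satisfies T(θ) = μ_0 for all θ ∈ H_0 and T(θ) = μ_1 for all θ ∈ H_1. Then for any prior probability distributions π_{H_0} on H_0 and π_{H_1} on H_1, and for any confidence interval CI_α(T, Z) ∈ I_α(T, H), we have sup_{θ∈H} E_θ L(CI_α(T, Z)) ≥ sup_{θ∈H_0} E_θ L(CI_α(T, Z)) ≥ |μ_1 − μ_0| · (1 − 2α − TV(f_{π_{H_1}}, f_{π_{H_0}}))_+, where x_+ = max{x, 0}. -/

import Mathlib

open MeasureTheory
open scoped ENNReal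

/-- **Lemma 1 (two-point adaptation lower bound).**
Suppose `Z ~ P_θ = f_θ dν` for `θ` in the parameter space `H = H₀ ∪ H₁`, and the
functional `T` satisfies `T(θ) = μ₀` on `H₀` and `T(θ) = μ₁` on `H₁`.  Then for any
priors `π₀` supported on `H₀` and `π₁` supported on `H₁`, and any `(1-α)`-level
confidence interval `[l(Z), u(Z)]` for `T` over `H`,
`sup_{θ ∈ H} E_θ L ≥ sup_{θ ∈ H₀} E_θ L ≥ |μ₁ - μ₀| (1 - 2α - TV(f_{π₁}, f_{π₀}))₊`,
where `f_π(z) = ∫ f_θ(z) π(dθ)` and `TV(f₁, f₀) = ∫ |f₁(z) - f₀(z)| dν(z)`. -/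
theorem two_point_lower_bound
    {Zsp H : Type*} [MeasurableSpace Zsp] [MeasurableSpace H]
    (ν : Measure Zsp) [SigmaFinite ν]
    (f : H → Zsp → ℝ)
    (hf_meas : Measurable (Function.uncurry f))
    (hf_nonneg : ∀ θ z, 0 ≤ f θ z)
    (hf_prob : ∀ θ, IsProbabilityMeasure
      (ν.withDensity fun z => ENNReal.ofReal (f θ z)))
    (H₀ H₁ : Set H) (hH : H₀ ∪ H₁ = Set.univ)
    (T : H → ℝ) (μ₀ μ₁ : ℝ)
    (hT₀ : ∀ θ ∈ H₀, T θ = μ₀) (hT₁ : ∀ θ ∈ H₁, T θ = μ₁)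
    (π₀ π₁ : Measure H) [IsProbabilityMeasure π₀] [IsProbabilityMeasure π₁]
    (hπ₀ : π₀ H₀ᶜ = 0) (hπ₁ : π₁ H₁ᶜ = 0)
    (α : ℝ) (hα₁ : 0 < α) (hα₂ : α < 1)
    (l u : Zsp → ℝ) (hl : Measurable l) (hu : Measurable u) (hlu : ∀ z, l z ≤ u z)
    (hcov : ∀ θ : H, ENNReal.ofReal (1 - α) ≤
      (ν.withDensity fun z => ENNReal.ofReal (f θ z)) {z | l z ≤ T θ ∧ T θ ≤ u z}) :
    ENNReal.ofReal (|μ₁ - μ₀| *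
        (1 - 2 * α - ∫ z, |(∫ θ, f θ z ∂π₁) - (∫ θ, f θ z ∂π₀)| ∂ν)) ≤
      (⨆ θ ∈ H₀, ∫⁻ z, ENNReal.ofReal (u z - l z)
          ∂(ν.withDensity fun z => ENNReal.ofReal (f θ z))) ∧
    (⨆ θ ∈ H₀, ∫⁻ z, ENNReal.ofReal (u z - l z)
        ∂(ν.withDensity fun z => ENNReal.ofReal (f θ z))) ≤
      ⨆ θ : H, ∫⁻ z, ENNReal.ofReal (u z - l z)
          ∂(ν.withDensity fun z => ENNReal.ofReal (f θ z)) := by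
  classical
  -- Notation
  have hF_joint : Measurable fun p : H × Zsp => ENNReal.ofReal (f p.1 p.2) :=
    hf_meas.ennreal_ofReal
  have hFtheta : ∀ θ, Measurable fun z => ENNReal.ofReal (f θ z) := fun θ =>
    (hf_meas.comp measurable_prodMk_left).ennreal_ofReal
  have hFz : ∀ z, Measurable fun θ => ENNReal.ofReal (f θ z) := fun z =>
    (hf_meas.comp measurable_prodMk_right).ennreal_ofReal
  have hL : Measurable fun z => ENNReal.ofReal (u z - l z) := (hu.sub hl).ennreal_ofReal
  -- the mixture densities (ENNReal-valued)
  have hG_meas : ∀ (π : Measure H) [SFinite π],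
      Measurable fun z => ∫⁻ θ, ENNReal.ofReal (f θ z) ∂π := by
    intro π _
    exact Measurable.lintegral_prod_left hF_joint
  -- mixture formula
  have mix : ∀ (π : Measure H) [SFinite π] (s : Set Zsp), MeasurableSet s →
      (ν.withDensity fun z => ∫⁻ θ, ENNReal.ofReal (f θ z) ∂π) s =
        ∫⁻ θ, (ν.withDensity fun z => ENNReal.ofReal (f θ z)) s ∂π := by
    intro π _ s hs
    rw [withDensity_apply _ hs]
    have hswap : ∫⁻ z in s, ∫⁻ θ, ENNReal.ofReal (f θ z) ∂π ∂ν
        = ∫⁻ θ, ∫⁻ z in s, ENNReal.ofReal (f θ z) ∂ν ∂π :=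
      lintegral_lintegral_swap ((hF_joint.comp measurable_swap).aemeasurable)
    rw [hswap]
    exact lintegral_congr fun θ => (withDensity_apply _ hs).symm
  -- total mass of mixtures is 1
  have mix_univ : ∀ (π : Measure H) [IsProbabilityMeasure π],
      (ν.withDensity fun z => ∫⁻ θ, ENNReal.ofReal (f θ z) ∂π) Set.univ = 1 := by
    intro π _
    rw [mix π Set.univ MeasurableSet.univ]
    have : ∀ θ : H, (ν.withDensity fun z => ENNReal.ofReal (f θ z)) Set.univ = 1 :=
      fun θ => (hf_prob θ).measure_univ
    simp [this]
  -- measurable target sets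
  have hA : MeasurableSet {z | l z ≤ μ₀ ∧ μ₀ ≤ u z} :=
    (measurableSet_le hl measurable_const).inter (measurableSet_le measurable_const hu)
  have hB : MeasurableSet {z | l z ≤ μ₁ ∧ μ₁ ≤ u z} :=
    (measurableSet_le hl measurable_const).inter (measurableSet_le measurable_const hu)
  -- coverage of the mixtures
  have cover : ∀ (π : Measure H) [IsProbabilityMeasure π] (Hi : Set H) (μi : ℝ),
      π Hiᶜ = 0 → (∀ θ ∈ Hi, T θ = μi) →
      ENNReal.ofReal (1 - α) ≤
        (ν.withDensity fun z => ∫⁻ θ, ENNReal.ofReal (f θ z) ∂π) {z | l z ≤ μi ∧ μi ≤ u z} := by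
    intro π _ Hi μi hπ hT
    have hs : MeasurableSet {z | l z ≤ μi ∧ μi ≤ u z} :=
      (measurableSet_le hl measurable_const).inter (measurableSet_le measurable_const hu)
    rw [mix π _ hs]
    have hae : ∀ᵐ θ ∂π, ENNReal.ofReal (1 - α) ≤
        (ν.withDensity fun z => ENNReal.ofReal (f θ z)) {z | l z ≤ μi ∧ μi ≤ u z} := by
      refine ae_iff.mpr (measure_mono_null ?_ hπ)
      intro θ hθ
      simp only [Set.mem_setOf_eq, not_le] at hθ
      by_contra hmem
      simp only [Set.mem_compl_iff, not_not] at hmem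
      have := hcov θ
      rw [hT θ hmem] at this
      exact absurd this (not_le_of_gt hθ)
    calc ENNReal.ofReal (1 - α)
        = ∫⁻ _, ENNReal.ofReal (1 - α) ∂π := by simp
      _ ≤ _ := lintegral_mono_ae hae
  -- lintegral of mixture densities equals 1
  have hGone : ∀ (π : Measure H) [IsProbabilityMeasure π],
      ∫⁻ z, (∫⁻ θ, ENNReal.ofReal (f θ z) ∂π) ∂ν = 1 := by
    intro π _
    have := mix_univ π
    rwa [withDensity_apply _ MeasurableSet.univ, Measure.restrict_univ] at this
  -- a.e. identification of the real-valued mixture density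
  have hGg : ∀ (π : Measure H) [IsProbabilityMeasure π],
      ∀ᵐ z ∂ν, ENNReal.ofReal (∫ θ, f θ z ∂π) =
        ∫⁻ θ, ENNReal.ofReal (f θ z) ∂π := by
    intro π _
    have hlt : ∀ᵐ z ∂ν, (∫⁻ θ, ENNReal.ofReal (f θ z) ∂π) < ⊤ :=
      ae_lt_top (hG_meas π) (by rw [hGone π]; exact ENNReal.one_ne_top)
    filter_upwards [hlt] with z hz
    have hint : Integrable (fun θ => f θ z) π := by
      refine ⟨(hf_meas.comp measurable_prodMk_right).aestronglyMeasurable, ?_⟩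
      show (∫⁻ θ, ‖f θ z‖ₑ ∂π) < ⊤
      calc ∫⁻ θ, ‖f θ z‖ₑ ∂π = ∫⁻ θ, ENNReal.ofReal (f θ z) ∂π :=
            lintegral_congr fun θ => Real.enorm_eq_ofReal (hf_nonneg θ z)
        _ < ⊤ := hz
    exact ofReal_integral_eq_lintegral_ofReal hint
      (Filter.Eventually.of_forall fun θ => hf_nonneg θ z)
  -- integrability of real-valued mixture densities
  have hg_int : ∀ (π : Measure H) [IsProbabilityMeasure π],
      Integrable (fun z => ∫ θ, f θ z ∂π) ν := by
    intro π _
    refine ⟨(hf_meas.stronglyMeasurable.integral_prod_left).aestronglyMeasurable, ?_⟩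
    show (∫⁻ z, ‖∫ θ, f θ z ∂π‖ₑ ∂ν) < ⊤
    have : ∫⁻ z, ‖∫ θ, f θ z ∂π‖ₑ ∂ν = ∫⁻ z, (∫⁻ θ, ENNReal.ofReal (f θ z) ∂π) ∂ν := by
      refine lintegral_congr_ae ?_
      filter_upwards [hGg π] with z hz
      rw [Real.enorm_eq_ofReal (integral_nonneg fun θ => hf_nonneg θ z), hz]
    rw [this, hGone π]
    exact ENNReal.one_lt_top
  -- abbreviations
  haveI hQprob : ∀ (π : Measure H) [IsProbabilityMeasure π],
      IsProbabilityMeasure (ν.withDensity fun z => ∫⁻ θ, ENNReal.ofReal (f θ z) ∂π) :=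
    fun π _ => ⟨mix_univ π⟩
  haveI := hQprob π₀; haveI := hQprob π₁
  set Q₀ : Measure Zsp := ν.withDensity fun z => ∫⁻ θ, ENNReal.ofReal (f θ z) ∂π₀ with hQ₀def
  set Q₁ : Measure Zsp := ν.withDensity fun z => ∫⁻ θ, ENNReal.ofReal (f θ z) ∂π₁ with hQ₁def
  set A : Set Zsp := {z | l z ≤ μ₀ ∧ μ₀ ≤ u z} with hAdef
  set B : Set Zsp := {z | l z ≤ μ₁ ∧ μ₁ ≤ u z} with hBdef
  set TV : ℝ := ∫ z, |(∫ θ, f θ z ∂π₁) - (∫ θ, f θ z ∂π₀)| ∂ν with hTVdef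
  have hTV_nonneg : 0 ≤ TV := integral_nonneg fun z => abs_nonneg _
  have hTV_int : Integrable (fun z => |(∫ θ, f θ z ∂π₁) - (∫ θ, f θ z ∂π₀)|) ν :=
    ((hg_int π₁).sub (hg_int π₀)).abs
  have hTV_lint : ENNReal.ofReal TV
      = ∫⁻ z, ENNReal.ofReal |(∫ θ, f θ z ∂π₁) - (∫ θ, f θ z ∂π₀)| ∂ν :=
    ofReal_integral_eq_lintegral_ofReal hTV_int
      (Filter.Eventually.of_forall fun z => abs_nonneg _)
  have hg₁_meas : Measurable fun z => ∫ θ, f θ z ∂π₁ :=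
    (hf_meas.stronglyMeasurable.integral_prod_left).measurable
  -- TV comparison between the two mixtures on Bᶜ
  have hQ0Bc : Q₀ Bᶜ ≤ Q₁ Bᶜ + ENNReal.ofReal TV := by
    rw [hQ₀def, hQ₁def, withDensity_apply _ hB.compl, withDensity_apply _ hB.compl, hTV_lint]
    calc ∫⁻ z in Bᶜ, (∫⁻ θ, ENNReal.ofReal (f θ z) ∂π₀) ∂ν
        = ∫⁻ z in Bᶜ, ENNReal.ofReal (∫ θ, f θ z ∂π₀) ∂ν :=
          (lintegral_congr_ae (ae_restrict_of_ae ((hGg π₀).mono fun z h => h.symm)))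
      _ ≤ ∫⁻ z in Bᶜ, (ENNReal.ofReal (∫ θ, f θ z ∂π₁)
            + ENNReal.ofReal |(∫ θ, f θ z ∂π₁) - (∫ θ, f θ z ∂π₀)|) ∂ν := by
          refine lintegral_mono fun z => ?_
          rw [← ENNReal.ofReal_add (integral_nonneg fun θ => hf_nonneg θ z) (abs_nonneg _)]
          refine ENNReal.ofReal_le_ofReal ?_
          have := abs_sub_abs_le_abs_sub (∫ θ, f θ z ∂π₀) (∫ θ, f θ z ∂π₁)
          have h1 : (∫ θ, f θ z ∂π₀) - (∫ θ, f θ z ∂π₁)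
              ≤ |(∫ θ, f θ z ∂π₁) - (∫ θ, f θ z ∂π₀)| := by
            rw [abs_sub_comm]; exact le_abs_self _
          linarith
      _ = ∫⁻ z in Bᶜ, ENNReal.ofReal (∫ θ, f θ z ∂π₁) ∂ν
            + ∫⁻ z in Bᶜ, ENNReal.ofReal |(∫ θ, f θ z ∂π₁) - (∫ θ, f θ z ∂π₀)| ∂ν :=
          lintegral_add_left hg₁_meas.ennreal_ofReal _
      _ ≤ ∫⁻ z in Bᶜ, (∫⁻ θ, ENNReal.ofReal (f θ z) ∂π₁) ∂ν
            + ∫⁻ z, ENNReal.ofReal |(∫ θ, f θ z ∂π₁) - (∫ θ, f θ z ∂π₀)| ∂ν := by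
          refine add_le_add ?_ (lintegral_mono' Measure.restrict_le_self le_rfl)
          exact le_of_eq (lintegral_congr_ae (ae_restrict_of_ae (hGg π₁)))
  -- coverage bounds for the mixtures
  have hQ0A : ENNReal.ofReal (1 - α) ≤ Q₀ A := cover π₀ H₀ μ₀ hπ₀ hT₀
  have hQ1B : ENNReal.ofReal (1 - α) ≤ Q₁ B := cover π₁ H₁ μ₁ hπ₁ hT₁
  have hQ1Bc : Q₁ Bᶜ ≤ ENNReal.ofReal α := by
    rw [measure_compl hB (measure_ne_top _ _), measure_univ, tsub_le_iff_right]
    calc (1 : ℝ≥0∞) = ENNReal.ofReal α + ENNReal.ofReal (1 - α) := by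
          rw [← ENNReal.ofReal_add (le_of_lt hα₁) (by linarith)]
          norm_num
      _ ≤ ENNReal.ofReal α + Q₁ B := add_le_add_right hQ1B _
  -- lower bound on Q₀ (A ∩ B)
  have hQ0AB : ENNReal.ofReal (1 - 2 * α - TV) ≤ Q₀ (A ∩ B) := by
    by_cases hc : 0 ≤ 1 - 2 * α - TV
    · have hfin : ENNReal.ofReal α + ENNReal.ofReal TV ≠ ⊤ := by finiteness
      refine (ENNReal.add_le_add_iff_right hfin).mp ?_
      calc ENNReal.ofReal (1 - 2 * α - TV) + (ENNReal.ofReal α + ENNReal.ofReal TV)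
          = ENNReal.ofReal (1 - α) := by
            rw [← ENNReal.ofReal_add (le_of_lt hα₁) hTV_nonneg,
              ← ENNReal.ofReal_add hc (by positivity)]
            ring_nf
        _ ≤ Q₀ A := hQ0A
        _ ≤ Q₀ (A ∩ B) + Q₀ Bᶜ := by
            refine le_trans (measure_mono ?_) (measure_union_le _ _)
            intro z hz
            by_cases hzB : z ∈ B
            · exact Or.inl ⟨hz, hzB⟩
            · exact Or.inr hzB
        _ ≤ Q₀ (A ∩ B) + (ENNReal.ofReal α + ENNReal.ofReal TV) :=
            add_le_add_right (hQ0Bc.trans (add_le_add_left hQ1Bc _)) _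
    · rw [ENNReal.ofReal_eq_zero.mpr (le_of_not_ge hc)]
      exact zero_le
  constructor
  · -- main lower bound
    calc ENNReal.ofReal (|μ₁ - μ₀| * (1 - 2 * α - TV))
        = ENNReal.ofReal |μ₁ - μ₀| * ENNReal.ofReal (1 - 2 * α - TV) :=
          ENNReal.ofReal_mul (abs_nonneg _)
      _ ≤ ENNReal.ofReal |μ₁ - μ₀| * Q₀ (A ∩ B) := mul_le_mul_right hQ0AB _
      _ = ∫⁻ z in A ∩ B, ENNReal.ofReal |μ₁ - μ₀| ∂Q₀ := by
          rw [setLIntegral_const, mul_comm]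
      _ ≤ ∫⁻ z in A ∩ B, ENNReal.ofReal (u z - l z) ∂Q₀ := by
          refine setLIntegral_mono hL fun z hz => ?_
          refine ENNReal.ofReal_le_ofReal ?_
          obtain ⟨⟨h1, h2⟩, ⟨h3, h4⟩⟩ := hz
          rw [abs_sub_le_iff]
          constructor <;> linarith
      _ ≤ ∫⁻ z, ENNReal.ofReal (u z - l z) ∂Q₀ :=
          lintegral_mono' Measure.restrict_le_self le_rfl
      _ = ∫⁻ θ, (∫⁻ z, ENNReal.ofReal (u z - l z)
            ∂(ν.withDensity fun z => ENNReal.ofReal (f θ z))) ∂π₀ := by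
          rw [hQ₀def, lintegral_withDensity_eq_lintegral_mul ν (hG_meas π₀) hL]
          have step1 : ∫⁻ z, ((fun z => ∫⁻ θ, ENNReal.ofReal (f θ z) ∂π₀)
              * fun z => ENNReal.ofReal (u z - l z)) z ∂ν
              = ∫⁻ z, ∫⁻ θ, ENNReal.ofReal (f θ z) * ENNReal.ofReal (u z - l z) ∂π₀ ∂ν := by
            refine lintegral_congr fun z => ?_
            simp only [Pi.mul_apply]
            rw [lintegral_mul_const _ (hFz z)]
          rw [step1]
          have hswap : ∫⁻ θ, ∫⁻ z, ENNReal.ofReal (f θ z) * ENNReal.ofReal (u z - l z) ∂ν ∂π₀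
              = ∫⁻ z, ∫⁻ θ, ENNReal.ofReal (f θ z) * ENNReal.ofReal (u z - l z) ∂π₀ ∂ν :=
            lintegral_lintegral_swap ((hF_joint.mul (hL.comp measurable_snd)).aemeasurable)
          rw [← hswap]
          refine lintegral_congr fun θ => ?_
          rw [lintegral_withDensity_eq_lintegral_mul ν (hFtheta θ) hL]
          rfl
      _ ≤ ⨆ θ ∈ H₀, ∫⁻ z, ENNReal.ofReal (u z - l z)
            ∂(ν.withDensity fun z => ENNReal.ofReal (f θ z)) := by
          have hae : ∀ᵐ θ ∂π₀, (∫⁻ z, ENNReal.ofReal (u z - l z)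
              ∂(ν.withDensity fun z => ENNReal.ofReal (f θ z)))
              ≤ ⨆ θ ∈ H₀, ∫⁻ z, ENNReal.ofReal (u z - l z)
                ∂(ν.withDensity fun z => ENNReal.ofReal (f θ z)) := by
            refine ae_iff.mpr (measure_mono_null ?_ hπ₀)
            intro θ hθ
            simp only [Set.mem_setOf_eq] at hθ
            by_contra hmem
            simp only [Set.mem_compl_iff, not_not] at hmem
            exact hθ (le_iSup₂ (f := fun (θ : H) (_ : θ ∈ H₀) =>
              ∫⁻ z, ENNReal.ofReal (u z - l z)
                ∂(ν.withDensity fun z => ENNReal.ofReal (f θ z))) θ hmem)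
          calc ∫⁻ θ, (∫⁻ z, ENNReal.ofReal (u z - l z)
                ∂(ν.withDensity fun z => ENNReal.ofReal (f θ z))) ∂π₀
              ≤ ∫⁻ _, (⨆ θ ∈ H₀, ∫⁻ z, ENNReal.ofReal (u z - l z)
                ∂(ν.withDensity fun z => ENNReal.ofReal (f θ z))) ∂π₀ :=
                lintegral_mono_ae hae
            _ = _ := by simp
  · exact iSup₂_le fun θ _ => le_iSup (fun θ : H => ∫⁻ z, ENNReal.ofReal (u z - l z)
      ∂(ν.withDensity fun z => ENNReal.ofReal (f θ z))) θ
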